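/- Let (Ω, ℱ, P) be a probability space, let N ≥ 1, let A₁, …, A_N be events, and let L ≥ 2 be an integer. Let φ⋆ ≥ 0 and suppose that for every k with 1 ≤ k and k + L + 1 ≤ N, every event C in σ(A₁, …, A_k) with P(C) > 0, and every event B in σ(A_{k+L+1}, …, A_N), one has |P(B ∣ C) − P(B)| ≤ φ⋆. Set S_N := ∑_{k=1}^N P(A_k), T_{L−1} := ∑_{1≤i<j≤N, j−i ≤ L−1} P(A_i ∩ A_j), and κ_{N,L} := ⌈N/L⌉ + 1. Then P(⋃_{k=1}^N A_k) ≥ 1 − exp(−(1/2)(S_N − T_{L−1} − κ_{N,L}·φ⋆)₊). -/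

import Mathlib

open MeasureTheory

lemma pair_sum_insert (g : ℕ → ℕ → ℝ)
    (hg : ∀ i j, g i j = g j i) (a : ℕ) (s : Finset ℕ) (ha : a ∉ s) :
    ∑ q ∈ ((insert a s) ×ˢ (insert a s)).filter (fun q => q.1 < q.2), g q.1 q.2
      = (∑ q ∈ (s ×ˢ s).filter (fun q => q.1 < q.2), g q.1 q.2) + ∑ i ∈ s, g a i := by
  classical
  have h1 : ∀ (u : Finset ℕ), ∑ q ∈ (u ×ˢ u).filter (fun q => q.1 < q.2), g q.1 q.2
      = ∑ i ∈ u, ∑ j ∈ u, if i < j then g i j else 0 := by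
    intro u
    rw [Finset.sum_filter, Finset.sum_product]
  rw [h1, h1, Finset.sum_insert ha]
  simp only [Finset.sum_insert ha, if_neg (lt_irrefl a)]
  rw [Finset.sum_add_distrib]
  have h2 : (∑ j ∈ s, if a < j then g a j else 0) + (∑ j ∈ s, if j < a then g j a else 0)
      = ∑ j ∈ s, g a j := by
    rw [← Finset.sum_add_distrib]
    refine Finset.sum_congr rfl fun j hj => ?_
    have hne : a ≠ j := fun h => ha (h ▸ hj)
    rcases lt_or_gt_of_ne hne with h | h
    · rw [if_pos h, if_neg (by omega), add_zero]
    · rw [if_neg (by omega), if_pos h, zero_add, hg]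
  linarith

lemma bonferroni_aux {Ω : Type*} [MeasurableSpace Ω] (P : Measure Ω) [IsProbabilityMeasure P]
    (A : ℕ → Set Ω) (s : Finset ℕ) (hmeas : ∀ i ∈ s, MeasurableSet (A i)) :
    (∑ i ∈ s, (P (A i)).toReal) -
      (∑ q ∈ (s ×ˢ s).filter (fun q => q.1 < q.2), (P (A q.1 ∩ A q.2)).toReal)
      ≤ (P (⋃ i ∈ s, A i)).toReal := by
  classical
  induction s using Finset.induction_on with
  | empty => simp
  | @insert a s ha ih =>
    have hma : MeasurableSet (A a) := hmeas a (Finset.mem_insert_self a s)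
    have hms : ∀ i ∈ s, MeasurableSet (A i) := fun i hi => hmeas i (Finset.mem_insert_of_mem hi)
    have hU : MeasurableSet (⋃ i ∈ s, A i) := MeasurableSet.biUnion s.countable_toSet (fun i hi => hms i hi)
    rw [pair_sum_insert (fun i j => (P (A i ∩ A j)).toReal)
        (fun i j => by simp only [Set.inter_comm]) a s ha, Finset.sum_insert ha,
      Finset.set_biUnion_insert]
    have hadd := measure_union_add_inter (μ := P) (A a) hU
    have hint : (P (A a ∩ ⋃ i ∈ s, A i)).toReal ≤ ∑ i ∈ s, (P (A a ∩ A i)).toReal := by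
      rw [Set.inter_iUnion₂]
      refine le_trans (ENNReal.toReal_mono ?_ (measure_biUnion_finset_le s _)) ?_
      · exact (ENNReal.sum_ne_top).2 fun i _ => measure_ne_top P _
      · rw [ENNReal.toReal_sum (fun i _ => measure_ne_top P _)]
    have hfin : ∀ S : Set Ω, (P S) ≠ ⊤ := fun S => measure_ne_top P S
    have hadd' : (P (A a ∪ ⋃ i ∈ s, A i)).toReal + (P (A a ∩ ⋃ i ∈ s, A i)).toReal
        = (P (A a)).toReal + (P (⋃ i ∈ s, A i)).toReal := by
      rw [← ENNReal.toReal_add (hfin _) (hfin _), ← ENNReal.toReal_add (hfin _) (hfin _), hadd]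
    have := ih hms
    linarith


def blkF (L N j : ℕ) : Finset ℕ := Finset.Icc ((j-1)*L+1) (min (j*L) N)

lemma genmeas {Ω : Type*} [MeasurableSpace Ω] (A : ℕ → Set Ω) (a b : ℕ) (s : Finset ℕ)
    (hs : ∀ i ∈ s, a ≤ i ∧ i ≤ b) :
    MeasurableSet[MeasurableSpace.generateFrom (A '' Set.Icc a b)] (⋃ i ∈ s, A i) :=
  .biUnion s.countable_toSet fun i hi =>
    MeasurableSpace.measurableSet_generateFrom ⟨i, ⟨(hs i hi).1, (hs i hi).2⟩, rfl⟩

lemma chain_bound {Ω : Type*} [MeasurableSpace Ω] (P : Measure Ω) [IsProbabilityMeasure P]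
    (N : ℕ) (A : ℕ → Set Ω) (L : ℕ) (hL : 2 ≤ L) (φs : ℝ) (hφs : 0 ≤ φs)
    (hmix : ∀ k, 1 ≤ k → k + L + 1 ≤ N →
      ∀ C : Set Ω,
        MeasurableSet[MeasurableSpace.generateFrom (A '' Set.Icc 1 k)] C → 0 < P C →
      ∀ B : Set Ω,
        MeasurableSet[MeasurableSpace.generateFrom (A '' Set.Icc (k + L + 1) N)] B →
          |(P (B ∩ C)).toReal / (P C).toReal - (P B).toReal| ≤ φs)
    (r : ℕ) (t : ℕ) (ht : t ≤ (N-1)/L + 1) :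
    (P (⋂ j ∈ (Finset.Icc 1 t).filter (fun j => j % 2 = r), (⋃ i ∈ blkF L N j, A i)ᶜ)).toReal
      ≤ ∏ j ∈ (Finset.Icc 1 t).filter (fun j => j % 2 = r),
          ((P (⋃ i ∈ blkF L N j, A i)ᶜ).toReal + φs) := by
  classical
  induction t with
  | zero => simp
  | succ t ih =>
    have ht' : t ≤ (N-1)/L + 1 := by omega
    have hIcc : Finset.Icc 1 (t+1) = insert (t+1) (Finset.Icc 1 t) :=
      (Finset.insert_Icc_right_eq_Icc_add_one (by omega)).symm
    rw [hIcc, Finset.filter_insert]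
    by_cases hr : (t+1) % 2 = r
    · rw [if_pos hr]
      have hnm : (t+1) ∉ (Finset.Icc 1 t).filter (fun j => j % 2 = r) := by
        simp [Finset.mem_filter]
      rw [Finset.set_biInter_insert, Finset.prod_insert hnm]
      set G := (Finset.Icc 1 t).filter (fun j => j % 2 = r) with hG
      set C := ⋂ j ∈ G, (⋃ i ∈ blkF L N j, A i)ᶜ with hC
      set Bc := (⋃ i ∈ blkF L N (t+1), A i)ᶜ with hBc
      have hfacnn : 0 ≤ (P Bc).toReal + φs := by positivity
      have hprodnn : 0 ≤ ∏ j ∈ G, ((P (⋃ i ∈ blkF L N j, A i)ᶜ).toReal + φs) :=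
        Finset.prod_nonneg fun j _ => by positivity
      rcases eq_or_ne (P C) 0 with hC0 | hCpos
      · have : P (Bc ∩ C) = 0 := measure_mono_null Set.inter_subset_right hC0
        rw [this]
        simpa using mul_nonneg hfacnn hprodnn
      · -- P C > 0
        have hCpos' : 0 < P C := hCpos.bot_lt
        rcases Finset.eq_empty_or_nonempty G with hGe | hGne
        · -- C = univ
          have hCuniv : C = Set.univ := by rw [hC, hGe]; simp
          have h1 : (P (Bc ∩ C)).toReal ≤ (P Bc).toReal + φs := by
            rw [hCuniv, Set.inter_univ]
            nlinarith [ENNReal.toReal_nonneg (a := P Bc)]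
          calc (P (Bc ∩ C)).toReal ≤ (P Bc).toReal + φs := h1
            _ ≤ ((P Bc).toReal + φs) * ∏ j ∈ G, ((P (⋃ i ∈ blkF L N j, A i)ᶜ).toReal + φs) := by
                rw [hGe]; simp
        · set j₀ := G.max' hGne with hj0
          have hj0mem : j₀ ∈ G := G.max'_mem hGne
          have hj0mem' := Finset.mem_filter.1 hj0mem
          have hj0Icc := Finset.mem_Icc.1 hj0mem'.1
          have hj0r : j₀ % 2 = r := hj0mem'.2
          have hj1t : j₀ + 1 ≤ t := by omega
          set k := j₀ * L with hk
          have hk1 : 1 ≤ k := by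
            have := Nat.mul_le_mul (show 1 ≤ j₀ by omega) (show 1 ≤ L by omega)
            simpa using this
          have h1 : j₀*L + L ≤ t*L := by
            have := Nat.mul_le_mul_right L hj1t
            rwa [Nat.succ_mul] at this
          have h2 : t*L ≤ N - 1 := by
            have htle : t ≤ (N-1)/L := by omega
            exact (Nat.le_div_iff_mul_le (by omega)).1 htle
          have hkN : k + L + 1 ≤ N := by omega
          have hCm : MeasurableSet[MeasurableSpace.generateFrom (A '' Set.Icc 1 k)] C := by
            rw [hC]
            refine MeasurableSet.biInter G.countable_toSet fun j hj => (genmeas A 1 k _ ?_).compl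
            intro i hi
            have hji : j ≤ j₀ := G.le_max' j hj
            have := Finset.mem_Icc.1 hi
            have hjL : j * L ≤ j₀ * L := Nat.mul_le_mul_right L hji
            exact ⟨by omega, by omega⟩
          have hBm : MeasurableSet[MeasurableSpace.generateFrom
              (A '' Set.Icc (k + L + 1) N)] Bc := by
            rw [hBc]
            refine (genmeas A (k+L+1) N _ ?_).compl
            intro i hi
            have := Finset.mem_Icc.1 hi
            simp only [Nat.add_sub_cancel] at this
            exact ⟨by omega, by omega⟩
          have hCpos' : 0 < P C := hCpos.bot_lt
          have hm := hmix k hk1 hkN C hCm hCpos' Bc hBm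
          have hCr : 0 < (P C).toReal := ENNReal.toReal_pos hCpos (measure_ne_top P C)
          have h3 : (P (Bc ∩ C)).toReal ≤ ((P Bc).toReal + φs) * (P C).toReal := by
            have h2' := (abs_le.1 hm).2
            have : (P (Bc ∩ C)).toReal / (P C).toReal ≤ (P Bc).toReal + φs := by linarith
            exact (div_le_iff₀ hCr).1 this
          calc (P (Bc ∩ C)).toReal ≤ ((P Bc).toReal + φs) * (P C).toReal := h3
            _ ≤ ((P Bc).toReal + φs) * ∏ j ∈ G, ((P (⋃ i ∈ blkF L N j, A i)ᶜ).toReal + φs) :=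
                mul_le_mul_of_nonneg_left (ih ht') hfacnn
    · rw [if_neg hr]; exact ih ht'

lemma blk_subset (L N j : ℕ) : blkF L N j ⊆ Finset.Icc 1 N := by
  intro i hi
  have := Finset.mem_Icc.1 hi
  exact Finset.mem_Icc.2 ⟨by omega, by omega⟩

lemma blk_mul (L j : ℕ) (hj : 1 ≤ j) : (j-1)*L + L = j*L := by
  have h : j - 1 + 1 = j := by omega
  rw [← h, Nat.succ_mul, h]

lemma blk_disjoint (L N : ℕ) (hL : 1 ≤ L) {j j' : ℕ} (hj : 1 ≤ j) (hj' : 1 ≤ j')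
    (hne : j ≠ j') : Disjoint (blkF L N j) (blkF L N j') := by
  wlog hlt : j < j' generalizing j j'
  · exact (this hj' hj hne.symm (by omega)).symm
  rw [Finset.disjoint_left]
  intro i hi hi'
  have h1 := Finset.mem_Icc.1 hi
  have h2 := Finset.mem_Icc.1 hi'
  have h3 : j*L ≤ (j'-1)*L := Nat.mul_le_mul_right L (by omega)
  omega

lemma blk_cover (L N : ℕ) (hL : 1 ≤ L) (hN : 1 ≤ N) :
    Finset.Icc 1 N = (Finset.Icc 1 ((N-1)/L + 1)).biUnion (blkF L N) := by
  apply Finset.Subset.antisymm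
  · intro i hi
    have hi' := Finset.mem_Icc.1 hi
    rw [Finset.mem_biUnion]
    refine ⟨(i-1)/L + 1, Finset.mem_Icc.2 ⟨Nat.succ_le_succ (Nat.zero_le _),
      Nat.add_le_add_right (Nat.div_le_div_right (by omega)) 1⟩, ?_⟩
    simp only [blkF, Finset.mem_Icc, Nat.add_sub_cancel]
    have hdm := Nat.div_add_mod (i-1) L
    have hmlt : (i-1) % L < L := Nat.mod_lt _ (by omega)
    have hml : ((i-1)/L)*L ≤ i - 1 := Nat.div_mul_le_self _ _
    have hsucc : ((i-1)/L + 1)*L = ((i-1)/L)*L + L := Nat.succ_mul _ _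
    have hmul : L * ((i-1)/L) = ((i-1)/L)*L := Nat.mul_comm _ _
    exact ⟨by omega, by omega⟩
  · intro i hi
    obtain ⟨j, _, hj2⟩ := Finset.mem_biUnion.1 hi
    exact blk_subset L N j hj2

lemma compl_toReal {Ω : Type*} [MeasurableSpace Ω] (P : Measure Ω) [IsProbabilityMeasure P]
    {s : Set Ω} (hs : MeasurableSet s) : (P sᶜ).toReal = 1 - (P s).toReal := by
  rw [prob_compl_eq_one_sub hs, ENNReal.toReal_sub_of_le prob_le_one (by simp)]
  simp

/-- Theorem (second-order φ-mixing inequality): with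
`S_N = ∑ₖ P(A k)`, `T_{L−1} = ∑_{1≤i<j≤N, j−i≤L−1} P(A i ∩ A j)` and
`κ_{N,L} = ⌈N/L⌉ + 1`,
`P(⋃ₖ A k) ≥ 1 − exp(−(1/2)(S_N − T_{L−1} − κ_{N,L}·φs)₊)`. -/
theorem second_order_phi_mixing_bound
    {Ω : Type*} [MeasurableSpace Ω] (P : Measure Ω) [IsProbabilityMeasure P]
    (N : ℕ) (hN : 1 ≤ N)
    (A : ℕ → Set Ω) (hA : ∀ k ∈ Finset.Icc 1 N, MeasurableSet (A k))
    (L : ℕ) (hL : 2 ≤ L) (φs : ℝ) (hφs : 0 ≤ φs)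
    (hmix : ∀ k, 1 ≤ k → k + L + 1 ≤ N →
      ∀ C : Set Ω,
        MeasurableSet[MeasurableSpace.generateFrom (A '' Set.Icc 1 k)] C → 0 < P C →
      ∀ B : Set Ω,
        MeasurableSet[MeasurableSpace.generateFrom (A '' Set.Icc (k + L + 1) N)] B →
          |(P (B ∩ C)).toReal / (P C).toReal - (P B).toReal| ≤ φs) :
    1 - Real.exp (-(1 / 2) *
        max ((∑ k ∈ Finset.Icc 1 N, (P (A k)).toReal)
          - (∑ p ∈ (Finset.Icc 1 N ×ˢ Finset.Icc 1 N).filter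
              (fun p => p.1 < p.2 ∧ p.2 - p.1 ≤ L - 1), (P (A p.1 ∩ A p.2)).toReal)
          - ((⌈(N : ℝ) / (L : ℝ)⌉₊ : ℝ) + 1) * φs) 0) ≤
      (P (⋃ k ∈ Finset.Icc 1 N, A k)).toReal := by
  classical
  set M := (N-1)/L + 1 with hM
  set E := ⋃ k ∈ Finset.Icc 1 N, A k with hE
  have hEmeas : MeasurableSet E :=
    MeasurableSet.biUnion (Finset.Icc 1 N).countable_toSet (fun i hi => hA i hi)
  set q := (P Eᶜ).toReal with hqdef
  have hq0 : 0 ≤ q := ENNReal.toReal_nonneg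
  have hBsubE : ∀ j, (⋃ i ∈ blkF L N j, A i) ⊆ E := fun j =>
    Set.iUnion₂_subset fun i hi => Set.subset_biUnion_of_mem (blk_subset L N j hi)
  -- step 1: q bounded by products over each parity class
  have hqle : ∀ r, q ≤ ∏ j ∈ (Finset.Icc 1 M).filter (fun j => j % 2 = r),
      ((P (⋃ i ∈ blkF L N j, A i)ᶜ).toReal + φs) := by
    intro r
    refine le_trans ?_ (chain_bound P N A L hL φs hφs hmix r M le_rfl)
    refine ENNReal.toReal_mono (measure_ne_top P _) (measure_mono ?_)
    intro x hx
    exact Set.mem_iInter₂.2 fun j hj hxB => hx (hBsubE j hxB)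
  -- per-block quantities
  set Sb : ℕ → ℝ := fun j => ∑ i ∈ blkF L N j, (P (A i)).toReal with hSb
  set Tb : ℕ → ℝ := fun j =>
    ∑ p ∈ ((blkF L N j) ×ˢ (blkF L N j)).filter (fun p => p.1 < p.2),
      (P (A p.1 ∩ A p.2)).toReal with hTb
  have hfac : ∀ j ∈ Finset.Icc 1 M,
      (P (⋃ i ∈ blkF L N j, A i)ᶜ).toReal + φs ≤ Real.exp (-(Sb j - Tb j - φs)) := by
    intro j _
    have hmeasB : MeasurableSet (⋃ i ∈ blkF L N j, A i) :=
      MeasurableSet.biUnion (blkF L N j).countable_toSet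
        (fun i hi => hA i (blk_subset L N j hi))
    have hbon := bonferroni_aux P A (blkF L N j) (fun i hi => hA i (blk_subset L N j hi))
    have hcompl : (P (⋃ i ∈ blkF L N j, A i)ᶜ).toReal
        = 1 - (P (⋃ i ∈ blkF L N j, A i)).toReal := compl_toReal P hmeasB
    have hexp := Real.add_one_le_exp (-(Sb j - Tb j - φs))
    simp only [hSb, hTb] at hexp ⊢
    linarith
  -- step 2: q^2 bounded by full product
  have hq2 : q * q ≤ ∏ j ∈ Finset.Icc 1 M, ((P (⋃ i ∈ blkF L N j, A i)ᶜ).toReal + φs) := by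
    have h0 := hqle 0
    have h1 := hqle 1
    have hflip : (Finset.Icc 1 M).filter (fun j => ¬ j % 2 = 0)
        = (Finset.Icc 1 M).filter (fun j => j % 2 = 1) := by
      apply Finset.filter_congr
      intro j _
      omega
    rw [← Finset.prod_filter_mul_prod_filter_not (Finset.Icc 1 M) (fun j => j % 2 = 0), hflip]
    exact mul_le_mul h0 h1 hq0 (le_trans hq0 h0)
  -- step 3: product bounded by exp of sums
  have hprod : ∏ j ∈ Finset.Icc 1 M, ((P (⋃ i ∈ blkF L N j, A i)ᶜ).toReal + φs)
      ≤ Real.exp (∑ j ∈ Finset.Icc 1 M, (-(Sb j - Tb j - φs))) := by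
    refine le_trans (Finset.prod_le_prod (fun j _ => by positivity) hfac) (le_of_eq ?_)
    rw [Real.exp_sum]
  -- block sums vs global sums
  have hdisj : (↑(Finset.Icc 1 M) : Set ℕ).PairwiseDisjoint (blkF L N) := by
    intro j hj j' hj' hne
    exact blk_disjoint L N (by omega)
      (by have := Finset.mem_Icc.1 (Finset.mem_coe.1 hj); omega)
      (by have := Finset.mem_Icc.1 (Finset.mem_coe.1 hj'); omega) hne
  have hS : ∑ k ∈ Finset.Icc 1 N, (P (A k)).toReal = ∑ j ∈ Finset.Icc 1 M, Sb j := by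
    rw [blk_cover L N (by omega) hN, Finset.sum_biUnion hdisj]
  set Tfull := ∑ p ∈ (Finset.Icc 1 N ×ˢ Finset.Icc 1 N).filter
      (fun p => p.1 < p.2 ∧ p.2 - p.1 ≤ L - 1), (P (A p.1 ∩ A p.2)).toReal with hTfull
  have hT : ∑ j ∈ Finset.Icc 1 M, Tb j ≤ Tfull := by
    have hdisjP : (↑(Finset.Icc 1 M) : Set ℕ).PairwiseDisjoint
        (fun j => ((blkF L N j) ×ˢ (blkF L N j)).filter (fun p => p.1 < p.2)) := by
      intro j hj j' hj' hne
      have hd : Disjoint (blkF L N j) (blkF L N j') := hdisj hj hj' hne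
      rw [Finset.disjoint_left] at hd
      exact Finset.disjoint_left.2 fun p hp hp' =>
        hd (Finset.mem_product.1 (Finset.mem_filter.1 hp).1).1
           (Finset.mem_product.1 (Finset.mem_filter.1 hp').1).1
    rw [← Finset.sum_biUnion hdisjP]
    refine Finset.sum_le_sum_of_subset_of_nonneg ?_ (fun _ _ _ => ENNReal.toReal_nonneg)
    intro p hp
    obtain ⟨j, hj, hpj⟩ := Finset.mem_biUnion.1 hp
    have hjIcc := Finset.mem_Icc.1 hj
    have hpf := Finset.mem_filter.1 hpj
    have hp1 := Finset.mem_Icc.1 (Finset.mem_product.1 hpf.1).1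
    have hp2 := Finset.mem_Icc.1 (Finset.mem_product.1 hpf.1).2
    have hmul := blk_mul L j (by omega)
    refine Finset.mem_filter.2 ⟨Finset.mem_product.2
      ⟨Finset.mem_Icc.2 ⟨by omega, by omega⟩, Finset.mem_Icc.2 ⟨by omega, by omega⟩⟩,
      hpf.2, by omega⟩
  -- κ comparison
  have hMκ : (M : ℝ) ≤ (⌈(N : ℝ) / (L : ℝ)⌉₊ : ℝ) + 1 := by
    have h1 : (((N-1)/L : ℕ) : ℝ) ≤ ((N-1 : ℕ) : ℝ) / (L : ℝ) := Nat.cast_div_le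
    have hL0 : (0:ℝ) < (L:ℝ) := by exact_mod_cast (show 0 < L by omega)
    have h2 : ((N-1 : ℕ) : ℝ) / (L : ℝ) ≤ (N : ℝ) / (L : ℝ) := by
      gcongr
      exact_mod_cast Nat.sub_le N 1
    have h3 := Nat.le_ceil ((N : ℝ) / (L : ℝ))
    have : (((N-1)/L : ℕ) : ℝ) ≤ (⌈(N : ℝ) / (L : ℝ)⌉₊ : ℝ) := by linarith
    have hMcast : (M : ℝ) = (((N-1)/L : ℕ) : ℝ) + 1 := by
      rw [hM]; push_cast; ring
    linarith
  -- assemble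
  set S := ∑ k ∈ Finset.Icc 1 N, (P (A k)).toReal with hSdef
  set κ := (⌈(N : ℝ) / (L : ℝ)⌉₊ : ℝ) + 1 with hκ
  have hcard : (Finset.Icc 1 M).card = M := by rw [Nat.card_Icc]; rfl
  have hsum : ∑ j ∈ Finset.Icc 1 M, (-(Sb j - Tb j - φs))
      = -(S - (∑ j ∈ Finset.Icc 1 M, Tb j) - M * φs) := by
    rw [hS]
    calc ∑ j ∈ Finset.Icc 1 M, (-(Sb j - Tb j - φs))
        = ∑ j ∈ Finset.Icc 1 M, ((φs + Tb j) - Sb j) :=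
          Finset.sum_congr rfl (fun j _ => by ring)
      _ = (∑ j ∈ Finset.Icc 1 M, (φs + Tb j)) - ∑ j ∈ Finset.Icc 1 M, Sb j :=
          Finset.sum_sub_distrib _ _
      _ = ((Finset.Icc 1 M).card • φs + ∑ j ∈ Finset.Icc 1 M, Tb j)
            - ∑ j ∈ Finset.Icc 1 M, Sb j := by
          rw [Finset.sum_add_distrib, Finset.sum_const]
      _ = -((∑ j ∈ Finset.Icc 1 M, Sb j) - (∑ j ∈ Finset.Icc 1 M, Tb j) - M * φs) := by
          rw [hcard, nsmul_eq_mul]; ring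
  have hq2exp : q * q ≤ Real.exp (-(S - Tfull - κ * φs)) := by
    refine le_trans hq2 (le_trans hprod ?_)
    rw [hsum]
    apply Real.exp_le_exp.2
    have hMφ : (M : ℝ) * φs ≤ κ * φs := mul_le_mul_of_nonneg_right hMκ hφs
    linarith
  set D := S - Tfull - κ * φs with hD
  have hqexp : q ≤ Real.exp (-D / 2) := by
    have hsq : Real.exp (-D/2) * Real.exp (-D/2) = Real.exp (-D) := by
      rw [← Real.exp_add]; ring_nf
    nlinarith [Real.exp_pos (-D/2)]
  have hqE : q = 1 - (P E).toReal := compl_toReal P hEmeas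
  rcases le_or_gt D 0 with hD0 | hD0
  · rw [max_eq_right hD0]
    simp only [mul_zero, Real.exp_zero]
    have : (0:ℝ) ≤ (P E).toReal := ENNReal.toReal_nonneg
    linarith
  · rw [max_eq_left hD0.le]
    have : -(1/2) * D = -D/2 := by ring
    rw [this]
    linarith
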